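/- Fix a sequence s and a window size ρ. Let G be a strict, transitively closed episode. If e is a derivable proper skeleton edge of G, then icl(G) = icl(G − e). If v is a derivable solitary node of G, then icl(G) = icl(G − v). -/

import Mathlib

open scoped Classical

/-- An episode: a finite directed acyclic graph with nodes drawn from `ℕ`,
labelled by symbols of an alphabet `α`. -/
structure Episode (α : Type*) where
  nodes : Finset ℕ
  edge : ℕ → ℕ → Prop
  lab : ℕ → α
  edge_mem : ∀ ⦃x y : ℕ⦄, edge x y → x ∈ nodes ∧ y ∈ nodes

namespace Episode

variable {α : Type*}

/-- Transitively closed: whenever there is a directed path from `u` to `v`,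
`(u,v)` is an edge. -/
def TransClosed (G : Episode α) : Prop :=
  ∀ ⦃u v : ℕ⦄, Relation.TransGen G.edge u v → G.edge u v

/-- Acyclic: no directed cycles. -/
def Acyclic (G : Episode α) : Prop := ∀ v : ℕ, ¬ Relation.TransGen G.edge v v

/-- Strict: any two distinct nodes sharing the same label are joined by a
directed path. -/
def Strict (G : Episode α) : Prop :=
  ∀ u ∈ G.nodes, ∀ v ∈ G.nodes, u ≠ v → G.lab u = G.lab v →
    Relation.TransGen G.edge u v ∨ Relation.TransGen G.edge v u

/-- The class `𝒮` of strict, transitively closed (acyclic) episodes. -/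
def inS (G : Episode α) : Prop := G.Acyclic ∧ G.TransClosed ∧ G.Strict

/-- A sequence `s` covers an episode `G`: there is an injective map from the
nodes of `G` to indices of `s` matching labels and respecting edges. -/
def Covers (s : List α) (G : Episode α) : Prop :=
  ∃ f : {v // v ∈ G.nodes} → Fin s.length,
    Function.Injective f ∧ (∀ v, s.get (f v) = G.lab v.1) ∧
      ∀ u v, G.edge u.1 v.1 → f u < f v

/-- `f` witnesses that `s` is an instance of `G`: a bijective valid mapping. -/
def IsInstanceMap (s : List α) (G : Episode α)
    (f : {v // v ∈ G.nodes} → Fin s.length) : Prop :=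
  Function.Bijective f ∧ (∀ v, s.get (f v) = G.lab v.1) ∧
    ∀ u v, G.edge u.1 v.1 → f u < f v

/-- The subgraph of `H` induced on a set `U` of nodes. -/
def restrict (H : Episode α) (U : Finset ℕ) : Episode α where
  nodes := U
  edge := fun x y => x ∈ U ∧ y ∈ U ∧ H.edge x y
  lab := H.lab
  edge_mem := by rintro x y ⟨h1, h2, -⟩; exact ⟨h1, h2⟩

/-- `G ⪯ H`: `G` is a subepisode of `H`.  There is a subgraph of `H` with as
many nodes as `G` such that every sequence covering that subgraph covers `G`. -/
def Subep (G H : Episode α) : Prop :=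
  ∃ U : Finset ℕ, U ⊆ H.nodes ∧ U.card = G.nodes.card ∧
    ∀ s : List α, Covers s (H.restrict U) → Covers s G

/-- `G ≺ H`: proper subepisode. -/
def ProperSubep (G H : Episode α) : Prop := Subep G H ∧ ¬ Subep H G

/-- `G ∼ H`: every sequence covers `G` iff it covers `H`. -/
def Equivalent (G H : Episode α) : Prop := ∀ s : List α, Covers s G ↔ Covers s H

/-- The nodes of `G` are `0, …, card − 1` listed in the canonical order:
labels increase, and nodes with equal labels are ordered by the edges. -/
def CanonicallyIndexed [LinearOrder α] (G : Episode α) : Prop :=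
  G.nodes = Finset.range G.nodes.card ∧
    ∀ u ∈ G.nodes, ∀ v ∈ G.nodes, u < v →
      G.lab u < G.lab v ∨ (G.lab u = G.lab v ∧ G.edge u v)

/-- An occurrence (instance) of `G` inside `s` whose span is smaller than the
window size `ρ`: an injective valid mapping with `max f − min f < ρ`. -/
def IsOcc (s : List α) (ρ : ℕ) (G : Episode α)
    (f : {v // v ∈ G.nodes} → Fin s.length) : Prop :=
  Function.Injective f ∧ (∀ v, s.get (f v) = G.lab v.1) ∧
    (∀ u v, G.edge u.1 v.1 → f u < f v) ∧
    ∀ u v, (f u : ℕ) < (f v : ℕ) + ρ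

/-- `G` occurs in `s` within some window of length at most `ρ`. -/
def Occurs (s : List α) (ρ : ℕ) (G : Episode α) : Prop := ∃ f, IsOcc s ρ G f

/-- The symbol `x` occurs in `s` inside the interval `[min f, max f]` of an
occurrence `f`. -/
def SymInWindow (s : List α) {G : Episode α}
    (f : {v // v ∈ G.nodes} → Fin s.length) (x : α) : Prop :=
  ∃ i : Fin s.length, s.get i = x ∧ (∃ u, f u ≤ i) ∧ ∃ v, i ≤ f v

/-- The node closure `cl_N`: augment `G` with one new isolated node labelled
`x` for each symbol `x` of `s`, not labelling a node of `G`, that occurs inside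
the interval of every occurrence of `G` (with span `< ρ`). -/
noncomputable def clN [LinearOrder α] (s : List α) (ρ : ℕ) (G : Episode α) :
    Episode α :=
  let newLabs : List α := (s.toFinset.filter
      (fun x => (∀ f, IsOcc s ρ G f → SymInWindow s f x) ∧
        ∀ v ∈ G.nodes, G.lab v ≠ x)).sort (· ≤ ·)
  let base : ℕ := G.nodes.sup id + 1
  { nodes := G.nodes ∪ (Finset.range newLabs.length).image (fun i => base + i)
    edge := G.edge
    lab := fun v =>
      if h : base ≤ v ∧ v - base < newLabs.length ∧ v ∉ G.nodes then
        newLabs.get ⟨v - base, h.2.1⟩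
      else G.lab v
    edge_mem := by
      intro x y h
      exact ⟨Finset.mem_union_left _ (G.edge_mem h).1,
        Finset.mem_union_left _ (G.edge_mem h).2⟩ }

/-- The edge closure `cl_E`: the maximal episode covered by all instances of
`G` in `s` with span `< ρ`; it has an edge `(x,y)` whenever the (unique) valid
mapping of every such instance places `x` before `y`. -/
def clE (s : List α) (ρ : ℕ) (G : Episode α) : Episode α where
  nodes := G.nodes
  edge := fun x y => ∃ (hx : x ∈ G.nodes) (hy : y ∈ G.nodes),
    ∀ f, IsOcc s ρ G f → f ⟨x, hx⟩ < f ⟨y, hy⟩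
  lab := G.lab
  edge_mem := by rintro x y ⟨hx, hy, -⟩; exact ⟨hx, hy⟩

/-- The `i`-closure `icl(G) = cl_E(cl_N(G))`. -/
noncomputable def icl [LinearOrder α] (s : List α) (ρ : ℕ) (G : Episode α) :
    Episode α :=
  clE s ρ (clN s ρ G)

/-- The window `s[a, b]` (0-based, inclusive endpoints). -/
def window (s : List α) (a b : ℕ) : List α := (s.take (b + 1)).drop a

/-- `s[a,b]` is a minimal window of `G` in `s`: it covers `G` and no proper
subwindow of it covers `G`. -/
def IsMinimalWindow (s : List α) (G : Episode α) (a b : ℕ) : Prop :=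
  a ≤ b ∧ b < s.length ∧ Covers (window s a b) G ∧
    ∀ a' b', a ≤ a' → b' ≤ b → a' ≤ b' → (a', b') ≠ (a, b) →
      ¬ Covers (window s a' b') G

/-- Fixed-window frequency: the number of windows of length `ρ` (indexed by
their right endpoints, windows may stick out of the sequence) covering `G`. -/
noncomputable def freqF (s : List α) (ρ : ℕ) (G : Episode α) : ℕ :=
  ((Finset.range (s.length + ρ - 1)).filter
    (fun b => Covers (window s (b + 1 - ρ) b) G)).card

/-- Disjoint-window frequency: the maximal number of pairwise disjoint
intervals of length at most `ρ` whose windows cover `G`. -/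
noncomputable def freqD (s : List α) (ρ : ℕ) (G : Episode α) : ℕ :=
  sSup {n : ℕ | ∃ I : Fin n → ℕ × ℕ,
    (∀ i, (I i).1 ≤ (I i).2 ∧ (I i).2 < (I i).1 + ρ ∧ (I i).2 < s.length ∧
      Covers (window s (I i).1 (I i).2) G) ∧
    ∀ i j, i ≠ j → (I i).2 < (I j).1 ∨ (I j).2 < (I i).1}

/-- `G` is f-closed w.r.t. the fixed-window frequency. -/
noncomputable def FClosedF (s : List α) (ρ : ℕ) (G : Episode α) : Prop :=
  ¬ ∃ H : Episode α, inS H ∧ ProperSubep G H ∧ freqF s ρ H = freqF s ρ G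

/-- `G` is f-closed w.r.t. the disjoint-window frequency. -/
noncomputable def FClosedD (s : List α) (ρ : ℕ) (G : Episode α) : Prop :=
  ¬ ∃ H : Episode α, inS H ∧ ProperSubep G H ∧ freqD s ρ H = freqD s ρ G

/-- `G − e`: remove an edge. -/
def eraseEdge (G : Episode α) (e : ℕ × ℕ) : Episode α where
  nodes := G.nodes
  edge := fun x y => G.edge x y ∧ (x, y) ≠ e
  lab := G.lab
  edge_mem := by rintro x y ⟨h, -⟩; exact G.edge_mem h

/-- `G − v`: remove a node together with all incident edges. -/
def eraseNode (G : Episode α) (w : ℕ) : Episode α where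
  nodes := G.nodes.erase w
  edge := fun x y => G.edge x y ∧ x ≠ w ∧ y ≠ w
  lab := G.lab
  edge_mem := by
    rintro x y ⟨h, hx, hy⟩
    exact ⟨Finset.mem_erase.mpr ⟨hx, (G.edge_mem h).1⟩,
      Finset.mem_erase.mpr ⟨hy, (G.edge_mem h).2⟩⟩

/-- `G + e`: add an edge. -/
def addEdge (G : Episode α) (e : ℕ × ℕ) : Episode α where
  nodes := G.nodes ∪ {e.1, e.2}
  edge := fun x y => G.edge x y ∨ (x, y) = e
  lab := G.lab
  edge_mem := by
    rintro x y (h | h)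
    · exact ⟨Finset.mem_union_left _ (G.edge_mem h).1,
        Finset.mem_union_left _ (G.edge_mem h).2⟩
    · cases h
      exact ⟨Finset.mem_union_right _ (by simp), Finset.mem_union_right _ (by simp)⟩

/-- A skeleton edge: an edge `(v,w)` such that there is no two-step path
`v → u → w`. -/
def IsSkeletonEdge (G : Episode α) (e : ℕ × ℕ) : Prop :=
  G.edge e.1 e.2 ∧ ¬ ∃ u, G.edge e.1 u ∧ G.edge u e.2

/-- A proper skeleton edge: a skeleton edge whose endpoints carry different
labels. -/
def IsProperSkeletonEdge (G : Episode α) (e : ℕ × ℕ) : Prop :=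
  IsSkeletonEdge G e ∧ G.lab e.1 ≠ G.lab e.2

/-- The set of edges of `G`, as a set of pairs. -/
def edgeSet (G : Episode α) : Set (ℕ × ℕ) := {p | G.edge p.1 p.2}

/-- Lexicographic order on edges (using the canonical order of the nodes). -/
def edgeLT (e f : ℕ × ℕ) : Prop := e.1 < f.1 ∨ (e.1 = f.1 ∧ e.2 < f.2)

/-- `e` is the last (lexicographically largest) proper skeleton edge of `G`. -/
def IsLastEdge (G : Episode α) (e : ℕ × ℕ) : Prop :=
  IsProperSkeletonEdge G e ∧
    ∀ f, IsProperSkeletonEdge G f → f = e ∨ edgeLT f e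

/-- A solitary node: a node with no incident edges. -/
def Solitary (G : Episode α) (v : ℕ) : Prop :=
  v ∈ G.nodes ∧ ∀ u, ¬ G.edge u v ∧ ¬ G.edge v u

/-- A source node: a node with no incoming edges. -/
def IsSource (G : Episode α) (v : ℕ) : Prop := v ∈ G.nodes ∧ ∀ u, ¬ G.edge u v

/-- A proper skeleton edge `e` of `G` is derivable if `G ⪯ icl(G − e)`. -/
noncomputable def DerivableEdge [LinearOrder α] (s : List α) (ρ : ℕ)
    (G : Episode α) (e : ℕ × ℕ) : Prop :=
  IsProperSkeletonEdge G e ∧ Subep G (icl s ρ (G.eraseEdge e))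

/-- A solitary node `v` of `G` is derivable if `G ⪯ icl(G − v)`. -/
noncomputable def DerivableNode [LinearOrder α] (s : List α) (ρ : ℕ)
    (G : Episode α) (v : ℕ) : Prop :=
  Solitary G v ∧ Subep G (icl s ρ (G.eraseNode v))

/-- `GreedyFrom s t G f`: `f` is the greedy mapping of `G` in the suffix of `s`
starting at (0-based) position `t`, recording absolute indices of `s`:
repeatedly map the source node of `G` whose label has the earliest remaining
occurrence to that position, and recurse on the episode with that node
removed and the part of the sequence after that position. -/
inductive GreedyFrom (s : List α) : ℕ → Episode α → (ℕ → ℕ) → Prop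
  | empty (t : ℕ) (G : Episode α) (f : ℕ → ℕ) (hG : G.nodes = ∅) :
      GreedyFrom s t G f
  | step (t : ℕ) (G : Episode α) (f : ℕ → ℕ) (v k : ℕ)
      (hv : G.IsSource v) (ht : t ≤ k) (hk : k < s.length)
      (hlab : s.get ⟨k, hk⟩ = G.lab v)
      (hmin : ∀ j (hj : j < s.length), t ≤ j → j < k →
        ¬ ∃ w, G.IsSource w ∧ s.get ⟨j, hj⟩ = G.lab w)
      (hfv : f v = k)
      (hrec : GreedyFrom s (k + 1) (G.eraseNode v) f) :
      GreedyFrom s t G f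

/-- One step of removing a derivable proper skeleton edge or a derivable
solitary node. -/
noncomputable def RemStep [LinearOrder α] (s : List α) (ρ : ℕ) :
    Episode α → Episode α → Prop := fun G G' =>
  (∃ e, DerivableEdge s ρ G e ∧ G' = G.eraseEdge e) ∨
  (∃ v, DerivableNode s ρ G v ∧ G' = G.eraseNode v)

end Episode
section Aux

set_option linter.unusedSectionVars false
set_option linter.unusedVariables false

open Episode

variable {α : Type*} [LinearOrder α] (s : List α) (ρ : ℕ)

/-- The finset of new labels used by `clN`. -/
noncomputable def newF (H : Episode α) : Finset α :=
  s.toFinset.filter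
      (fun x => (∀ f, IsOcc s ρ H f → SymInWindow s f x) ∧
        ∀ v ∈ H.nodes, H.lab v ≠ x)

/-- The sorted list of new labels used by `clN`. -/
noncomputable def nls (H : Episode α) : List α := (newF s ρ H).sort (· ≤ ·)

/-- The base offset for new nodes used by `clN`. -/
def nbase (H : Episode α) : ℕ := H.nodes.sup id + 1

lemma clN_nodes (H : Episode α) :
    (clN s ρ H).nodes
      = H.nodes ∪ (Finset.range (nls s ρ H).length).image (fun i => nbase H + i) := rfl

lemma clN_edge' (H : Episode α) : (clN s ρ H).edge = H.edge := rfl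

lemma clN_lab' (H : Episode α) :
    (clN s ρ H).lab = fun v =>
      if h : nbase H ≤ v ∧ v - nbase H < (nls s ρ H).length ∧ v ∉ H.nodes then
        (nls s ρ H).get ⟨v - nbase H, h.2.1⟩
      else H.lab v := rfl

lemma nbase_add_not_mem (H : Episode α) (i : ℕ) : nbase H + i ∉ H.nodes := by
  intro h
  have := Finset.le_sup (f := id) h
  simp only [id] at this
  unfold nbase at this
  omega

lemma clN_lab_old {H : Episode α} {x : ℕ} (hx : x ∈ H.nodes) :
    (clN s ρ H).lab x = H.lab x := by
  rw [clN_lab']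
  exact dif_neg (by tauto)

lemma clN_lab_new {H : Episode α} {i : ℕ} (hi : i < (nls s ρ H).length) :
    (clN s ρ H).lab (nbase H + i) = (nls s ρ H).get ⟨i, hi⟩ := by
  rw [clN_lab']
  have hcond : nbase H ≤ nbase H + i ∧ nbase H + i - nbase H < (nls s ρ H).length ∧
      nbase H + i ∉ H.nodes := ⟨Nat.le_add_right _ _, by simpa using hi, nbase_add_not_mem H i⟩
  dsimp only
  rw [dif_pos hcond]
  congr 1
  ext
  simp

lemma clN_mem_nodes {H : Episode α} {x : ℕ} :
    x ∈ (clN s ρ H).nodes ↔ x ∈ H.nodes ∨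
      ∃ i, ∃ _ : i < (nls s ρ H).length, x = nbase H + i := by
  rw [clN_nodes]
  simp only [Finset.mem_union, Finset.mem_image, Finset.mem_range]
  constructor
  · rintro (h | ⟨i, hi, rfl⟩)
    · exact Or.inl h
    · exact Or.inr ⟨i, hi, rfl⟩
  · rintro (h | ⟨i, hi, rfl⟩)
    · exact Or.inl h
    · exact Or.inr ⟨i, hi, rfl⟩

lemma mem_nls {H : Episode α} {x : α} : x ∈ nls s ρ H ↔ x ∈ newF s ρ H :=
  Finset.mem_sort _

lemma newF_notlab {H : Episode α} {x : α} (hx : x ∈ newF s ρ H) :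
    ∀ v ∈ H.nodes, H.lab v ≠ x := (Finset.mem_filter.1 hx).2.2

lemma newF_win {H : Episode α} {x : α} (hx : x ∈ newF s ρ H) :
    ∀ f, IsOcc s ρ H f → SymInWindow s f x := (Finset.mem_filter.1 hx).2.1

/-- The "new node" of `clN` carrying label `x`. -/
noncomputable def newNode (H : Episode α) (x : α) : ℕ :=
  nbase H + (nls s ρ H).idxOf x

lemma newNode_mem {H : Episode α} {x : α} (hx : x ∈ newF s ρ H) :
    newNode s ρ H x ∈ (clN s ρ H).nodes := by
  rw [clN_mem_nodes]
  exact Or.inr ⟨_, List.idxOf_lt_length_iff.2 ((mem_nls s ρ).2 hx), rfl⟩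

lemma newNode_lab {H : Episode α} {x : α} (hx : x ∈ newF s ρ H) :
    (clN s ρ H).lab (newNode s ρ H x) = x := by
  rw [newNode, clN_lab_new s ρ (List.idxOf_lt_length_iff.2 ((mem_nls s ρ).2 hx))]
  exact List.idxOf_get _

lemma newNode_not_old {H : Episode α} (x : α) : newNode s ρ H x ∉ H.nodes :=
  nbase_add_not_mem H _

lemma newNode_inj {H : Episode α} {x y : α} (hx : x ∈ newF s ρ H) (hy : y ∈ newF s ρ H)
    (h : newNode s ρ H x = newNode s ρ H y) : x = y := by
  have hx' := List.idxOf_lt_length_iff.2 ((mem_nls s ρ).2 hx)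
  have hy' := List.idxOf_lt_length_iff.2 ((mem_nls s ρ).2 hy)
  have : (nls s ρ H).idxOf x = (nls s ρ H).idxOf y := by
    unfold newNode at h; omega
  rw [← List.idxOf_get hx', ← List.idxOf_get hy']
  congr 1
  exact Fin.ext this

lemma clN_node_cases {H : Episode α} {u : ℕ} (hu : u ∈ (clN s ρ H).nodes) :
    u ∈ H.nodes ∨ ∃ x ∈ newF s ρ H, u = newNode s ρ H x ∧ (clN s ρ H).lab u = x := by
  rcases (clN_mem_nodes s ρ).1 hu with h | ⟨i, hi, rfl⟩
  · exact Or.inl h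
  · refine Or.inr ⟨(nls s ρ H).get ⟨i, hi⟩, (mem_nls s ρ).1 (List.get_mem _ _), ?_, ?_⟩
    · rw [newNode]
      congr 1
      exact (List.get_idxOf (Finset.sort_nodup _ _) ⟨i, hi⟩).symm
    · exact clN_lab_new s ρ hi

lemma clN_new_lab_inj {H : Episode α} {a b : ℕ}
    (ha : a ∈ (clN s ρ H).nodes) (ha' : a ∉ H.nodes)
    (hb : b ∈ (clN s ρ H).nodes) (hb' : b ∉ H.nodes)
    (hlab : (clN s ρ H).lab a = (clN s ρ H).lab b) : a = b := by
  rcases clN_node_cases s ρ ha with h | ⟨x, hx, rfl, hxl⟩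
  · exact absurd h ha'
  rcases clN_node_cases s ρ hb with h | ⟨y, hy, rfl, hyl⟩
  · exact absurd h hb'
  rw [hxl, hyl] at hlab
  rw [hlab]

lemma occ_comp {H K : Episode α} (φ : {x // x ∈ H.nodes} → {y // y ∈ K.nodes})
    (hinj : Function.Injective φ)
    (hlab : ∀ x, K.lab (φ x).1 = H.lab x.1)
    (hedge : ∀ x y, H.edge x.1 y.1 → K.edge (φ x).1 (φ y).1)
    {f} (hf : IsOcc s ρ K f) : IsOcc s ρ H (f ∘ φ) :=
  ⟨hf.1.comp hinj, fun x => (hf.2.1 (φ x)).trans (hlab x),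
    fun u v h => hf.2.2.1 _ _ (hedge u v h), fun u v => hf.2.2.2 _ _⟩

lemma covers_comp {H K : Episode α} (φ : {x // x ∈ H.nodes} → {y // y ∈ K.nodes})
    (hinj : Function.Injective φ)
    (hlab : ∀ x, K.lab (φ x).1 = H.lab x.1)
    (hedge : ∀ x y, H.edge x.1 y.1 → K.edge (φ x).1 (φ y).1)
    {t : List α} (h : Covers t K) : Covers t H := by
  obtain ⟨F, hF1, hF2, hF3⟩ := h
  exact ⟨F ∘ φ, hF1.comp hinj, fun x => (hF2 (φ x)).trans (hlab x),
    fun u v h => hF3 _ _ (hedge u v h)⟩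

/-- Any occurrence of `clN H` restricts to an occurrence of `H`. -/
lemma occ_restrict {H : Episode α} {f} (hf : IsOcc s ρ (clN s ρ H) f) :
    IsOcc s ρ H (f ∘ (fun x : {x // x ∈ H.nodes} =>
      (⟨x.1, Finset.mem_union_left _ x.2⟩ : {y // y ∈ (clN s ρ H).nodes}))) := by
  refine occ_comp s ρ _ ?_ ?_ ?_ hf
  · intro a b hab
    have := congrArg Subtype.val hab
    simp only at this
    exact Subtype.ext this
  · intro x
    exact clN_lab_old s ρ x.2
  · intro x y h
    exact h

/-- Any occurrence of `H` extends to an occurrence of `clN H`, placed within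
the same window. -/
lemma occ_extend {H : Episode α} {f} (hf : IsOcc s ρ H f) :
    ∃ g, IsOcc s ρ (clN s ρ H) g ∧
      (∀ (x : ℕ) (hx : x ∈ H.nodes), g ⟨x, Finset.mem_union_left _ hx⟩ = f ⟨x, hx⟩) ∧
      (∀ u, ∃ a b, (f a : ℕ) ≤ (g u : ℕ) ∧ (g u : ℕ) ≤ (f b : ℕ)) := by
  classical
  have hchoice : ∀ i : Fin (nls s ρ H).length, ∃ j : Fin s.length,
      s.get j = (nls s ρ H).get i ∧ (∃ a, (f a : ℕ) ≤ (j : ℕ)) ∧ (∃ b, (j : ℕ) ≤ (f b : ℕ)) := by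
    intro i
    have hmem : (nls s ρ H).get i ∈ newF s ρ H :=
      (mem_nls s ρ).1 (List.get_mem _ _)
    obtain ⟨j, hj1, ⟨a, ha⟩, ⟨b, hb⟩⟩ := newF_win s ρ hmem f hf
    exact ⟨j, hj1, ⟨a, ha⟩, ⟨b, hb⟩⟩
  choose J hJ1 hJ2 hJ3 using hchoice
  have hnew : ∀ (u : {x // x ∈ (clN s ρ H).nodes}), u.1 ∉ H.nodes →
      u.1 - nbase H < (nls s ρ H).length ∧ u.1 = nbase H + (u.1 - nbase H) := by
    intro u hu
    rcases (clN_mem_nodes s ρ).1 u.2 with h | ⟨i, hi, hieq⟩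
    · exact absurd h hu
    · constructor <;> omega
  set g : {x // x ∈ (clN s ρ H).nodes} → Fin s.length :=
    fun u => if hu : u.1 ∈ H.nodes then f ⟨u.1, hu⟩
      else J ⟨u.1 - nbase H, (hnew u hu).1⟩ with hg
  have hlabnew : ∀ (u : {x // x ∈ (clN s ρ H).nodes}) (hu : u.1 ∉ H.nodes),
      (clN s ρ H).lab u.1 = (nls s ρ H).get ⟨u.1 - nbase H, (hnew u hu).1⟩ := by
    intro u hu
    obtain ⟨h1, h2⟩ := hnew u hu
    calc (clN s ρ H).lab u.1 = (clN s ρ H).lab (nbase H + (u.1 - nbase H)) := by rw [← h2]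
    _ = (nls s ρ H).get ⟨u.1 - nbase H, h1⟩ := clN_lab_new s ρ h1
  have hglab : ∀ u, s.get (g u) = (clN s ρ H).lab u.1 := by
    intro u
    by_cases hu : u.1 ∈ H.nodes
    · rw [hg]; dsimp only; rw [dif_pos hu, clN_lab_old s ρ hu]; exact hf.2.1 _
    · rw [hg]; dsimp only; rw [dif_neg hu, hlabnew u hu]; exact hJ1 _
  have hbnd : ∀ u, ∃ a b, (f a : ℕ) ≤ (g u : ℕ) ∧ (g u : ℕ) ≤ (f b : ℕ) := by
    intro u
    by_cases hu : u.1 ∈ H.nodes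
    · refine ⟨⟨u.1, hu⟩, ⟨u.1, hu⟩, ?_, ?_⟩ <;>
        (rw [hg]; dsimp only; rw [dif_pos hu])
    · obtain ⟨a, ha⟩ := hJ2 ⟨u.1 - nbase H, (hnew u hu).1⟩
      obtain ⟨b, hb⟩ := hJ3 ⟨u.1 - nbase H, (hnew u hu).1⟩
      refine ⟨a, b, ?_, ?_⟩ <;> (rw [hg]; dsimp only; rw [dif_neg hu])
      · exact ha
      · exact hb
  have ginj : Function.Injective g := by
    intro a b hab
    have hl : (clN s ρ H).lab a.1 = (clN s ρ H).lab b.1 := by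
      rw [← hglab a, ← hglab b, hab]
    by_cases ha : a.1 ∈ H.nodes <;> by_cases hb : b.1 ∈ H.nodes
    · rw [hg] at hab; dsimp only at hab; rw [dif_pos ha, dif_pos hb] at hab
      have h2 := congrArg Subtype.val (hf.1 hab)
      exact Subtype.ext h2
    · exfalso
      rw [clN_lab_old s ρ ha, hlabnew b hb] at hl
      exact newF_notlab s ρ ((mem_nls s ρ).1 (List.get_mem _ _)) a.1 ha hl
    · exfalso
      rw [clN_lab_old s ρ hb, hlabnew a ha] at hl
      exact newF_notlab s ρ ((mem_nls s ρ).1 (List.get_mem _ _)) b.1 hb hl.symm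
    · exact Subtype.ext (clN_new_lab_inj s ρ a.2 ha b.2 hb hl)
  refine ⟨g, ⟨ginj, hglab, ?_, ?_⟩, ?_, hbnd⟩
  · intro u v huv
    have hu : u.1 ∈ H.nodes := (H.edge_mem huv).1
    have hv : v.1 ∈ H.nodes := (H.edge_mem huv).2
    have h1 : g u = f ⟨u.1, hu⟩ := by rw [hg]; dsimp only; rw [dif_pos hu]
    have h2 : g v = f ⟨v.1, hv⟩ := by rw [hg]; dsimp only; rw [dif_pos hv]
    rw [h1, h2]
    exact hf.2.2.1 _ _ huv
  · intro u v
    obtain ⟨a, b, ha, hb⟩ := hbnd u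
    obtain ⟨a', b', ha', hb'⟩ := hbnd v
    have := hf.2.2.2 b a'
    omega
  · intro x hx
    rw [hg]; dsimp only; rw [dif_pos hx]

lemma Episode.ext' {G H : Episode α} (hn : G.nodes = H.nodes) (he : G.edge = H.edge)
    (hl : G.lab = H.lab) : G = H := by
  cases G; cases H
  dsimp only at hn he hl
  subst hn; subst he; subst hl
  rfl

lemma lemM (prec : ℕ → ℕ → Prop) (u1 u2 : ℕ → ℕ) :
    ∀ C : Finset ℕ,
      (∀ x ∈ C, ∀ y ∈ C, x ≠ y → prec x y ∨ prec y x) →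
      (∀ x ∈ C, ∀ y ∈ C, prec x y → u1 x < u1 y) →
      (∀ x ∈ C, ∀ y ∈ C, prec x y → u2 x < u2 y) →
      C.image u1 = C.image u2 →
      ∀ x ∈ C, u1 x = u2 x := by
  intro C
  induction C using Finset.strongInduction with
  | _ C ih =>
    intro htot h1 h2 himg x hx
    have hinj1 : ∀ a ∈ C, ∀ b ∈ C, u1 a = u1 b → a = b := by
      intro a ha b hb hab
      by_contra hne
      rcases htot a ha b hb hne with h | h
      · exact absurd hab (Nat.ne_of_lt (h1 a ha b hb h))
      · exact absurd hab.symm (Nat.ne_of_lt (h1 b hb a ha h))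
    have hinj2 : ∀ a ∈ C, ∀ b ∈ C, u2 a = u2 b → a = b := by
      intro a ha b hb hab
      by_contra hne
      rcases htot a ha b hb hne with h | h
      · exact absurd hab (Nat.ne_of_lt (h2 a ha b hb h))
      · exact absurd hab.symm (Nat.ne_of_lt (h2 b hb a ha h))
    have hCne : (C.image u1).Nonempty := ⟨u1 x, Finset.mem_image_of_mem _ hx⟩
    obtain ⟨a, ha, hau⟩ := Finset.mem_image.1 ((C.image u1).max'_mem hCne)
    have hbmem : (C.image u1).max' hCne ∈ C.image u2 := by
      rw [← himg]; exact Finset.max'_mem _ _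
    obtain ⟨b, hb, hbu⟩ := Finset.mem_image.1 hbmem
    have hba : b = a := by
      by_contra hne
      rcases htot b hb a ha hne with h | h
      · have hlt := h2 b hb a ha h
        have hle : u2 a ≤ (C.image u1).max' hCne := by
          refine Finset.le_max' _ _ ?_
          rw [himg]
          exact Finset.mem_image_of_mem _ ha
        omega
      · have hlt := h1 a ha b hb h
        have hle := Finset.le_max' (C.image u1) (u1 b) (Finset.mem_image_of_mem _ hb)
        omega
    rw [hba] at hbu
    clear hb hba
    have haa : u1 a = u2 a := by rw [hau, hbu]
    by_cases hxa : x = a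
    · subst hxa; exact haa
    · have hxe : x ∈ C.erase a := Finset.mem_erase.2 ⟨hxa, hx⟩
      refine ih (C.erase a) (Finset.erase_ssubset ha) ?_ ?_ ?_ ?_ x hxe
      · intro p hp q hq
        exact htot p (Finset.mem_of_mem_erase hp) q (Finset.mem_of_mem_erase hq)
      · intro p hp q hq
        exact h1 p (Finset.mem_of_mem_erase hp) q (Finset.mem_of_mem_erase hq)
      · intro p hp q hq
        exact h2 p (Finset.mem_of_mem_erase hp) q (Finset.mem_of_mem_erase hq)
      · ext z
        simp only [Finset.mem_image]
        constructor
        · rintro ⟨y, hy, rfl⟩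
          have hyC := Finset.mem_of_mem_erase hy
          have hz : u1 y ∈ C.image u2 := himg ▸ Finset.mem_image_of_mem _ hyC
          obtain ⟨y', hy', hyy⟩ := Finset.mem_image.1 hz
          refine ⟨y', Finset.mem_erase.2 ⟨?_, hy'⟩, hyy⟩
          intro heq
          have h5 : u1 y = u1 a := by rw [← hyy, heq, hbu, ← hau]
          exact (Finset.mem_erase.1 hy).1 (hinj1 y hyC a ha h5)
        · rintro ⟨y, hy, rfl⟩
          have hyC := Finset.mem_of_mem_erase hy
          have hz : u2 y ∈ C.image u1 := himg ▸ Finset.mem_image_of_mem _ hyC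
          obtain ⟨y', hy', hyy⟩ := Finset.mem_image.1 hz
          refine ⟨y', Finset.mem_erase.2 ⟨?_, hy'⟩, hyy⟩
          intro heq
          have h5 : u2 y = u2 a := by rw [← hyy, heq, hau, ← hbu]
          exact (Finset.mem_erase.1 hy).1 (hinj2 y hyC a ha h5)

lemma covers_icl_mono {A B : Episode α}
    (φ : {x // x ∈ (clN s ρ A).nodes} → {y // y ∈ (clN s ρ B).nodes})
    (hinj : Function.Injective φ)
    (hlab : ∀ x, (clN s ρ B).lab (φ x).1 = (clN s ρ A).lab x.1)
    (hedge : ∀ x y, (clN s ρ A).edge x.1 y.1 → (clN s ρ B).edge (φ x).1 (φ y).1)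
    {t : List α} (h : Covers t (icl s ρ B)) : Covers t (icl s ρ A) := by
  refine covers_comp (H := icl s ρ A) (K := icl s ρ B) φ hinj hlab ?_ h
  intro x y hxy
  obtain ⟨hx, hy, hall⟩ := hxy
  refine ⟨(φ x).2, (φ y).2, ?_⟩
  intro g hg
  have hocc := occ_comp s ρ (H := clN s ρ A) (K := clN s ρ B) φ hinj hlab hedge hg
  exact hall (g ∘ φ) hocc

lemma sorted_indexOf_lt {β : Type*} [BEq β] [LawfulBEq β] {r : β → β → Prop} [IsAntisymm β r]
    {L : List β} (hs : List.Pairwise r L) (hn : L.Nodup) {a b : β}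
    (ha : a ∈ L) (hb : b ∈ L) (hab : a ≠ b) (hr : r a b) :
    L.idxOf a < L.idxOf b := by
  have ha' := List.idxOf_lt_length_iff.2 ha
  have hb' := List.idxOf_lt_length_iff.2 hb
  rcases lt_trichotomy (L.idxOf a) (L.idxOf b) with h | h | h
  · exact h
  · exfalso
    have h3 : (⟨L.idxOf a, ha'⟩ : Fin L.length) = ⟨L.idxOf b, hb'⟩ := Fin.ext h
    have h4 := congrArg L.get h3
    rw [List.idxOf_get, List.idxOf_get] at h4
    exact hab h4
  · have h2 := hs.rel_get_of_lt (a := ⟨L.idxOf b, hb'⟩) (b := ⟨L.idxOf a, ha'⟩) h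
    rw [List.idxOf_get, List.idxOf_get] at h2
    exact absurd (antisymm hr h2) hab

lemma get_map_aux {β γ : Type*} (F : β → γ) (L : List β) (i : Fin (L.map F).length) :
    (L.map F).get i = F (L.get ⟨i, by simpa using i.2⟩) := by
  simp

lemma crux {G : Episode α} (hG : inS G) {e : ℕ × ℕ} (hD : DerivableEdge s ρ G e) :
    ∀ f, IsOcc s ρ (clN s ρ (G.eraseEdge e)) f →
      ∀ (h1 : e.1 ∈ (clN s ρ (G.eraseEdge e)).nodes)
        (h2 : e.2 ∈ (clN s ρ (G.eraseEdge e)).nodes),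
        f ⟨e.1, h1⟩ < f ⟨e.2, h2⟩ := by
  classical
  obtain ⟨⟨⟨hevw, -⟩, hlabne⟩, U, hU1, hU2, hU3⟩ := hD
  intro f₀ hf₀ h1 h2
  by_contra hcon
  have hne : e.1 ≠ e.2 := by
    intro hh
    exact hG.1 e.2 (Relation.TransGen.single (hh ▸ hevw))
  have hle : f₀ ⟨e.2, h2⟩ ≤ f₀ ⟨e.1, h1⟩ := not_lt.1 hcon
  have hlt : f₀ ⟨e.2, h2⟩ < f₀ ⟨e.1, h1⟩ := by
    rcases eq_or_lt_of_le hle with hh | hh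
    · exact absurd (congrArg Subtype.val (hf₀.1 hh)) (Ne.symm hne)
    · exact hh
  set R : ℕ → ℕ → Prop := fun x y =>
    ∃ (hx : x ∈ (clN s ρ (G.eraseEdge e)).nodes) (hy : y ∈ (clN s ρ (G.eraseEdge e)).nodes),
      ∀ f, IsOcc s ρ (clN s ρ (G.eraseEdge e)) f → f ⟨x, hx⟩ < f ⟨y, hy⟩ with hRdef
  have Rtrans : ∀ {x y z}, R x y → R y z → R x z := by
    rintro x y z ⟨hx, hy, hxy⟩ ⟨hy', hz, hyz⟩
    exact ⟨hx, hz, fun f hf => (hxy f hf).trans (hyz f hf)⟩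
  have Rirr : ∀ {x}, ¬ R x x := by
    rintro x ⟨hx, hx', hxx⟩
    exact lt_irrefl _ (hxx f₀ hf₀)
  have hnRvw : ¬ R e.1 e.2 := by
    rintro ⟨hx, hy, hh⟩
    exact absurd (hh f₀ hf₀) (not_lt.2 hlt.le)
  set R' : ℕ → ℕ → Prop := fun x y =>
    R x y ∨ ((x = e.2 ∨ R x e.2) ∧ (y = e.1 ∨ R e.1 y)) with hR'def
  have R'trans : ∀ {x y z}, R' x y → R' y z → R' x z := by
    rintro x y z (hxy | ⟨hx2, hy2⟩) (hyz | ⟨hy2', hz2⟩)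
    · exact Or.inl (Rtrans hxy hyz)
    · refine Or.inr ⟨Or.inr ?_, hz2⟩
      rcases hy2' with rfl | hh
      · exact hxy
      · exact Rtrans hxy hh
    · refine Or.inr ⟨hx2, Or.inr ?_⟩
      rcases hy2 with rfl | hh
      · exact hyz
      · exact Rtrans hh hyz
    · exact Or.inr ⟨hx2, hz2⟩
  have R'irr : ∀ {x}, ¬ R' x x := by
    rintro x (hh | ⟨ha, hb⟩)
    · exact Rirr hh
    · rcases ha with rfl | ha
      · rcases hb with heq | hb
        · exact hne heq.symm
        · exact hnRvw hb
      · rcases hb with heq | hb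
        · exact hnRvw (heq ▸ ha)
        · exact hnRvw (Rtrans hb ha)
  set S := {x // x ∈ (clN s ρ (G.eraseEdge e)).nodes} with hSdef
  set le : S → S → Prop := fun a b => a = b ∨ R' a.1 b.1 with hledef
  letI : IsPartialOrder S le :=
    { refl := fun a => Or.inl rfl
      trans := by
        rintro a b c (rfl | hab) hbc
        · exact hbc
        · rcases hbc with rfl | hbc
          · exact Or.inr hab
          · exact Or.inr (R'trans hab hbc)
      antisymm := by
        rintro a b (rfl | hab) h2'
        · rfl
        · rcases h2' with rfl | hba
          · rfl
          · exact absurd (R'trans hab hba) R'irr }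
  obtain ⟨r, hrlin, hrext⟩ := extend_partialOrder le
  haveI : IsTrans S r := hrlin.toIsPartialOrder.toIsPreorder.toIsTrans
  haveI : IsAntisymm S r := hrlin.toIsPartialOrder.toAntisymm
  haveI : IsTotal S r := hrlin.toTotal
  haveI : DecidableRel r := Classical.decRel r
  set Lst : List S := Finset.univ.sort r with hLdef
  have hsorted : List.Pairwise r Lst := Finset.pairwise_sort _ r
  have hnodup : Lst.Nodup := Finset.sort_nodup _ r
  have hmemL : ∀ a : S, a ∈ Lst := fun a => (Finset.mem_sort r).2 (Finset.mem_univ a)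
  have hidxlt : ∀ a : S, Lst.idxOf a < Lst.length := fun a => List.idxOf_lt_length_iff.2 (hmemL a)
  have hmono : ∀ a b : S, a ≠ b → le a b → Lst.idxOf a < Lst.idxOf b := by
    intro a b hab hleab
    exact sorted_indexOf_lt hsorted hnodup (hmemL a) (hmemL b) hab (hrext _ _ hleab)
  set t : List α := Lst.map (fun a => (clN s ρ (G.eraseEdge e)).lab a.1) with htdef
  have hlen : Lst.length = t.length := (List.length_map _).symm
  have hcov : Covers t ((icl s ρ (G.eraseEdge e)).restrict U) := by
    refine ⟨fun u => ⟨Lst.idxOf ⟨u.1, hU1 u.2⟩, hlen ▸ hidxlt _⟩, ?_, ?_, ?_⟩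
    · intro a b hab
      have h4 := congrArg Fin.val hab
      simp only at h4
      have h5 : (⟨a.1, hU1 a.2⟩ : S) = ⟨b.1, hU1 b.2⟩ := by
        have ha' := List.idxOf_get (hidxlt (⟨a.1, hU1 a.2⟩ : S))
        have hb' := List.idxOf_get (hidxlt (⟨b.1, hU1 b.2⟩ : S))
        rw [← ha', ← hb']
        congr 1
        exact Fin.ext h4
      have h6 : (⟨a.1, hU1 a.2⟩ : S).1 = (⟨b.1, hU1 b.2⟩ : S).1 := congrArg Subtype.val h5
      exact Subtype.ext h6
    · intro u
      show (Lst.map _).get _ = _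
      rw [get_map_aux]
      have hg7 : Lst.get ⟨Lst.idxOf (⟨u.1, hU1 u.2⟩ : S), hidxlt _⟩ = ⟨u.1, hU1 u.2⟩ :=
        List.idxOf_get _
      rw [hg7]
      rfl
    · rintro x y ⟨hxU, hyU, hRxy⟩
      have hxy' : R x.1 y.1 := hRxy
      have hnexy : (⟨x.1, hU1 x.2⟩ : S) ≠ ⟨y.1, hU1 y.2⟩ := by
        intro hcontra
        have := congrArg Subtype.val hcontra
        simp only at this
        rw [this] at hxy'
        exact Rirr hxy'
      exact hmono _ _ hnexy (Or.inr (Or.inl hxy'))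
  obtain ⟨h, hhinj, hhlab, hhedge⟩ := hU3 t hcov
  have hGsub : ∀ {x : ℕ}, x ∈ G.nodes → x ∈ (clN s ρ (G.eraseEdge e)).nodes := fun hx =>
    Finset.mem_union_left _ hx
  have hold : ∀ (a : S) (x : ℕ), x ∈ G.nodes →
      (clN s ρ (G.eraseEdge e)).lab a.1 = G.lab x → a.1 ∈ G.nodes := by
    intro a x hx hlab
    rcases clN_node_cases s ρ a.2 with h' | ⟨y, hy, hay, hayl⟩
    · exact h'
    · exfalso
      have hyx : G.lab x = y := hlab.symm.trans hayl
      exact newF_notlab s ρ hy x hx hyx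
  set u1 : ℕ → ℕ := fun x =>
    if hx : x ∈ (clN s ρ (G.eraseEdge e)).nodes then Lst.idxOf ⟨x, hx⟩ else 0 with hu1def
  set u2 : ℕ → ℕ := fun x => if hx : x ∈ G.nodes then (h ⟨x, hx⟩ : ℕ) else 0 with hu2def
  have hu1 : ∀ (x) (hx : x ∈ (clN s ρ (G.eraseEdge e)).nodes),
      u1 x = Lst.idxOf ⟨x, hx⟩ := by
    intro x hx; rw [hu1def]; exact dif_pos hx
  have hu2 : ∀ (x) (hx : x ∈ G.nodes), u2 x = h ⟨x, hx⟩ := by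
    intro x hx; rw [hu2def]; exact dif_pos hx
  have hkey : ∀ (x : ℕ) (hx : x ∈ G.nodes), ∃ x' ∈ G.nodes,
      G.lab x' = G.lab x ∧ u1 x' = u2 x := by
    intro x hx
    have pf : ((h ⟨x, hx⟩ : Fin t.length) : ℕ) < Lst.length := by
      rw [hlen]; exact (h ⟨x, hx⟩).2
    set a : S := Lst.get ⟨(h ⟨x, hx⟩ : Fin t.length), pf⟩ with hadef
    have hta : t.get (h ⟨x, hx⟩) = (clN s ρ (G.eraseEdge e)).lab a.1 := by
      show (Lst.map _).get _ = _
      rw [get_map_aux]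
    have hlabx : (clN s ρ (G.eraseEdge e)).lab a.1 = G.lab x := by
      rw [← hta]; exact hhlab ⟨x, hx⟩
    have hmema : a.1 ∈ G.nodes := hold a x hx hlabx
    refine ⟨a.1, hmema, ?_, ?_⟩
    · have hh := (clN_lab_old s ρ (show a.1 ∈ (G.eraseEdge e).nodes from hmema)).symm.trans hlabx
      exact hh
    · rw [hu1 a.1 a.2, hu2 x hx]
      have heta : (⟨a.1, a.2⟩ : S) = a := rfl
      rw [heta, hadef]
      rw [List.get_idxOf hnodup]
  have hmain : ∀ (x₀ : ℕ), x₀ ∈ G.nodes → u1 x₀ = u2 x₀ := by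
    intro x₀ hx₀
    set C := G.nodes.filter (fun y => G.lab y = G.lab x₀) with hCdef
    have hCsub : ∀ y ∈ C, y ∈ G.nodes := fun y hy => (Finset.mem_filter.1 hy).1
    have htot : ∀ p ∈ C, ∀ q ∈ C, p ≠ q → G.edge p q ∨ G.edge q p := by
      intro p hp q hq hpq
      obtain ⟨hp1, hp2⟩ := Finset.mem_filter.1 hp
      obtain ⟨hq1, hq2⟩ := Finset.mem_filter.1 hq
      rcases hG.2.2 p hp1 q hq1 hpq (hp2.trans hq2.symm) with h' | h'
      · exact Or.inl (hG.2.1 h')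
      · exact Or.inr (hG.2.1 h')
    have hm1 : ∀ p ∈ C, ∀ q ∈ C, G.edge p q → u1 p < u1 q := by
      intro p hp q hq hpq
      obtain ⟨hp1, hp2⟩ := Finset.mem_filter.1 hp
      obtain ⟨hq1, hq2⟩ := Finset.mem_filter.1 hq
      have hnotc : (p, q) ≠ e := by
        intro hpe
        apply hlabne
        have he1 : e.1 = p := by rw [← hpe]
        have he2 : e.2 = q := by rw [← hpe]
        rw [he1, he2, hp2, hq2]
      have hpq' : p ≠ q := by
        rintro rfl; exact hG.1 p (Relation.TransGen.single hpq)
      have hRpq : R p q := ⟨hGsub hp1, hGsub hq1, fun f hf => hf.2.2.1 _ _ ⟨hpq, hnotc⟩⟩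
      rw [hu1 p (hGsub hp1), hu1 q (hGsub hq1)]
      refine hmono _ _ ?_ (Or.inr (Or.inl hRpq))
      intro hcontra
      exact hpq' (congrArg Subtype.val hcontra)
    have hm2 : ∀ p ∈ C, ∀ q ∈ C, G.edge p q → u2 p < u2 q := by
      intro p hp q hq hpq
      rw [hu2 p (hCsub p hp), hu2 q (hCsub q hq)]
      exact hhedge _ _ hpq
    have hinj1 : Set.InjOn u1 C := by
      intro p hp q hq hpq2
      by_contra hne2
      rcases htot p (Finset.mem_coe.1 hp) q (Finset.mem_coe.1 hq) hne2 with h' | h'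
      · exact absurd hpq2 (Nat.ne_of_lt (hm1 p (Finset.mem_coe.1 hp) q (Finset.mem_coe.1 hq) h'))
      · exact absurd hpq2.symm (Nat.ne_of_lt (hm1 q (Finset.mem_coe.1 hq) p (Finset.mem_coe.1 hp) h'))
    have hinj2 : Set.InjOn u2 C := by
      intro p hp q hq hpq2
      by_contra hne2
      rcases htot p (Finset.mem_coe.1 hp) q (Finset.mem_coe.1 hq) hne2 with h' | h'
      · exact absurd hpq2 (Nat.ne_of_lt (hm2 p (Finset.mem_coe.1 hp) q (Finset.mem_coe.1 hq) h'))
      · exact absurd hpq2.symm (Nat.ne_of_lt (hm2 q (Finset.mem_coe.1 hq) p (Finset.mem_coe.1 hp) h'))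
    have hsub : C.image u2 ⊆ C.image u1 := by
      intro z hz
      obtain ⟨p, hp, rfl⟩ := Finset.mem_image.1 hz
      obtain ⟨p', hp'1, hp'2, hp'3⟩ := hkey p (hCsub p hp)
      refine Finset.mem_image.2 ⟨p', ?_, hp'3⟩
      refine Finset.mem_filter.2 ⟨hp'1, ?_⟩
      rw [hp'2, (Finset.mem_filter.1 hp).2]
    have himg : C.image u1 = C.image u2 := by
      refine (Finset.eq_of_subset_of_card_le hsub ?_).symm
      rw [Finset.card_image_of_injOn hinj2, Finset.card_image_of_injOn hinj1]
    exact lemM G.edge u1 u2 C htot hm1 hm2 himg x₀ (Finset.mem_filter.2 ⟨hx₀, rfl⟩)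
  have hv := hmain e.1 (G.edge_mem hevw).1
  have hw := hmain e.2 (G.edge_mem hevw).2
  have hvw2 : u2 e.1 < u2 e.2 := by
    rw [hu2 _ (G.edge_mem hevw).1, hu2 _ (G.edge_mem hevw).2]
    exact hhedge _ _ hevw
  have hwv1 : u1 e.2 < u1 e.1 := by
    rw [hu1 _ (hGsub (G.edge_mem hevw).2), hu1 _ (hGsub (G.edge_mem hevw).1)]
    refine hmono _ _ ?_ (Or.inr (Or.inr ⟨Or.inl rfl, Or.inl rfl⟩))
    intro hcontra
    exact hne (congrArg Subtype.val hcontra).symm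
  omega

lemma part1 {G : Episode α} (hG : inS G) {e : ℕ × ℕ} (hD : DerivableEdge s ρ G e) :
    icl s ρ G = icl s ρ (G.eraseEdge e) := by
  classical
  have hevw : G.edge e.1 e.2 := hD.1.1.1
  have hcr := crux s ρ hG hD
  have hmem1 : e.1 ∈ G.nodes := (G.edge_mem hevw).1
  have hmem2 : e.2 ∈ G.nodes := (G.edge_mem hevw).2
  have hOcc : ∀ f : {v // v ∈ G.nodes} → Fin s.length,
      IsOcc s ρ G f ↔ IsOcc s ρ (G.eraseEdge e) f := by
    intro f
    constructor
    · rintro ⟨a, b, c, d⟩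
      exact ⟨a, b, fun u v h => c u v h.1, d⟩
    · rintro hf
      obtain ⟨g, hg, hagree, -⟩ := occ_extend s ρ hf
      refine ⟨hf.1, hf.2.1, ?_, hf.2.2.2⟩
      intro u v huv
      by_cases hc : (u.1, v.1) = e
      · have hu1 : u.1 = e.1 := congrArg Prod.fst hc
        have hv1 : v.1 = e.2 := congrArg Prod.snd hc
        have hue : u = ⟨e.1, hu1 ▸ u.2⟩ := Subtype.ext hu1
        have hve : v = ⟨e.2, hv1 ▸ v.2⟩ := Subtype.ext hv1
        rw [hue, hve]
        have hlt := hcr g hg (Finset.mem_union_left _ hmem1) (Finset.mem_union_left _ hmem2)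
        rw [hagree e.1 hmem1, hagree e.2 hmem2] at hlt
        exact hlt
      · exact hf.2.2.1 u v ⟨huv, hc⟩
  have hNFeq : newF s ρ G = newF s ρ (G.eraseEdge e) := by
    ext x
    simp only [newF, Finset.mem_filter]
    constructor
    · rintro ⟨hxs, hwin, hlab⟩
      exact ⟨hxs, fun f hf => hwin f ((hOcc f).2 hf), hlab⟩
    · rintro ⟨hxs, hwin, hlab⟩
      exact ⟨hxs, fun f hf => hwin f ((hOcc f).1 hf), hlab⟩
  have hnlseq : nls s ρ G = nls s ρ (G.eraseEdge e) := by rw [nls, nls, hNFeq]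
  have hKnodes : (clN s ρ (G.eraseEdge e)).nodes = (clN s ρ G).nodes := by
    rw [clN_nodes, clN_nodes, hnlseq]
    exact rfl
  have hKlab : (clN s ρ (G.eraseEdge e)).lab = (clN s ρ G).lab := by
    rw [clN_lab', clN_lab', hnlseq]
    exact rfl
  have hKedge_mem : ∀ ⦃x y : ℕ⦄, (G.eraseEdge e).edge x y →
      x ∈ (clN s ρ G).nodes ∧ y ∈ (clN s ρ G).nodes := by
    intro x y h
    rw [← hKnodes]
    exact (clN s ρ (G.eraseEdge e)).edge_mem h
  set K : Episode α := ⟨(clN s ρ G).nodes, (G.eraseEdge e).edge, (clN s ρ G).lab, hKedge_mem⟩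
    with hKdef
  have hclNK : clN s ρ (G.eraseEdge e) = K := Episode.ext' hKnodes rfl hKlab
  rw [hclNK] at hcr
  have hONK : ∀ f : {v // v ∈ (clN s ρ G).nodes} → Fin s.length,
      IsOcc s ρ (clN s ρ G) f ↔ IsOcc s ρ K f := by
    intro f
    constructor
    · rintro ⟨a, b, c, d⟩
      refine ⟨a, b, ?_, d⟩
      intro u v huv
      exact c u v huv.1
    · rintro hf
      refine ⟨hf.1, hf.2.1, ?_, hf.2.2.2⟩
      intro u v huv
      by_cases hc : (u.1, v.1) = e
      · have hu1 : u.1 = e.1 := congrArg Prod.fst hc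
        have hv1 : v.1 = e.2 := congrArg Prod.snd hc
        have hue : u = ⟨e.1, hu1 ▸ u.2⟩ := Subtype.ext hu1
        have hve : v = ⟨e.2, hv1 ▸ v.2⟩ := Subtype.ext hv1
        rw [hue, hve]
        exact hcr f hf (hu1 ▸ u.2) (hv1 ▸ v.2)
      · exact hf.2.2.1 u v ⟨huv, hc⟩
  have hiff : ∀ x y, (clE s ρ (clN s ρ G)).edge x y ↔ (clE s ρ K).edge x y := by
    intro x y
    constructor
    · rintro ⟨hx, hy, hall⟩
      exact ⟨hx, hy, fun f hf => hall f ((hONK f).2 hf)⟩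
    · rintro ⟨hx, hy, hall⟩
      exact ⟨hx, hy, fun f hf => hall f ((hONK f).1 hf)⟩
  show clE s ρ (clN s ρ G) = clE s ρ (clN s ρ (G.eraseEdge e))
  rw [hclNK]
  exact Episode.ext' rfl (funext fun x => funext fun y => propext (hiff x y)) rfl

lemma part2 {G : Episode α} (hG : inS G) {v : ℕ} (hD : DerivableNode s ρ G v) :
    ∀ t : List α, Covers t (icl s ρ G) ↔ Covers t (icl s ρ (G.eraseNode v)) := by
  classical
  obtain ⟨⟨hvmem, hsol⟩, U, hU1, hU2, hU3⟩ := hD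
  have hlabuniq : ∀ u ∈ G.nodes, G.lab u = G.lab v → u = v := by
    intro u hu hlab
    by_contra hne
    rcases hG.2.2 u hu v hvmem hne hlab with h | h
    · cases h with
      | single h' => exact (hsol _).1 h'
      | tail _ h' => exact (hsol _).1 h'
    · have hnoout : ∀ w, ¬ Relation.TransGen G.edge v w := by
        intro w hw
        induction hw with
        | single h' => exact (hsol _).2 h'
        | tail _ h' ih => exact ih
      exact hnoout u h
  have hGmem : ∀ {x : ℕ}, x ∈ (G.eraseNode v).nodes → x ∈ G.nodes := fun hx =>
    Finset.mem_of_mem_erase hx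
  have hGne : ∀ {x : ℕ}, x ∈ (G.eraseNode v).nodes → x ≠ v := fun hx =>
    (Finset.mem_erase.1 hx).1
  have hres : ∀ {f}, IsOcc s ρ G f → IsOcc s ρ (G.eraseNode v)
      (f ∘ (fun x : {x // x ∈ (G.eraseNode v).nodes} =>
        (⟨x.1, hGmem x.2⟩ : {y // y ∈ G.nodes}))) := by
    intro f hf
    refine occ_comp s ρ _ ?_ ?_ ?_ hf
    · intro a b hab
      have h2 := congrArg Subtype.val hab
      simp only at h2
      exact Subtype.ext h2
    · intro x; rfl
    · intro x y h; exact h.1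
  by_cases hocc : ∃ f, IsOcc s ρ (G.eraseNode v) f
  · -- occurrences exist
    obtain ⟨f₀, hf₀⟩ := hocc
    have hUne : U.Nonempty := Finset.card_pos.1 (by rw [hU2]; exact Finset.card_pos.2 ⟨v, hvmem⟩)
    have hG2ne : (G.eraseNode v).nodes.Nonempty := by
      by_contra hemp
      rw [Finset.not_nonempty_iff_eq_empty] at hemp
      have hNFemp : newF s ρ (G.eraseNode v) = ∅ := by
        rw [Finset.eq_empty_iff_forall_notMem]
        intro x hx
        obtain ⟨i, -, ⟨u, -⟩, -⟩ := newF_win s ρ hx f₀ hf₀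
        exact Finset.eq_empty_iff_forall_notMem.1 hemp u.1 u.2
      have hnodesemp : (clN s ρ (G.eraseNode v)).nodes = ∅ := by
        rw [clN_nodes, hemp]
        have hnil : nls s ρ (G.eraseNode v) = [] := by
          rw [nls, hNFemp, Finset.sort_empty]
        rw [hnil]
        simp
      obtain ⟨x₀, hx₀U⟩ := hUne
      have hmm : x₀ ∈ (clN s ρ (G.eraseNode v)).nodes := hU1 hx₀U
      exact Finset.eq_empty_iff_forall_notMem.1 hnodesemp x₀ hmm
    have hW : ∀ f, IsOcc s ρ (G.eraseNode v) f → ∃ g, IsOcc s ρ G g ∧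
        ∀ x, ∃ u u', (f u : ℕ) ≤ (g x : ℕ) ∧ (g x : ℕ) ≤ (f u' : ℕ) := by
      intro f hf
      obtain ⟨fh, hfh, hagree, hbnd⟩ := occ_extend s ρ hf
      obtain ⟨w0, hw0⟩ := hG2ne
      haveI hSne : Nonempty {x // x ∈ (clN s ρ (G.eraseNode v)).nodes} :=
        ⟨⟨w0, Finset.mem_union_left _ hw0⟩⟩
      have hex : ∃ a b : ℕ, (∃ u0, (fh u0 : ℕ) = a) ∧ (∃ u1, (fh u1 : ℕ) = b) ∧
          (∀ u, a ≤ (fh u : ℕ)) ∧ (∀ u, (fh u : ℕ) ≤ b) := by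
        have hTne : (Finset.univ.image (fun u : {x // x ∈ (clN s ρ (G.eraseNode v)).nodes} =>
            (fh u : ℕ))).Nonempty :=
          ⟨_, Finset.mem_image_of_mem _ (Finset.mem_univ (Classical.arbitrary _))⟩
        obtain ⟨ua, -, hua⟩ := Finset.mem_image.1 (Finset.min'_mem (Finset.univ.image
          (fun u : {x // x ∈ (clN s ρ (G.eraseNode v)).nodes} => (fh u : ℕ))) hTne)
        obtain ⟨ub, -, hub⟩ := Finset.mem_image.1 (Finset.max'_mem (Finset.univ.image
          (fun u : {x // x ∈ (clN s ρ (G.eraseNode v)).nodes} => (fh u : ℕ))) hTne)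
        refine ⟨_, _, ⟨ua, hua⟩, ⟨ub, hub⟩, ?_, ?_⟩
        · intro u
          apply Finset.min'_le
          exact Finset.mem_image_of_mem _ (Finset.mem_univ u)
        · intro u
          apply Finset.le_max'
          exact Finset.mem_image_of_mem _ (Finset.mem_univ u)
      obtain ⟨a, b, ⟨ua, hua⟩, ⟨ub, hub⟩, hage, hble⟩ := hex
      have hbs : b < s.length := by rw [← hub]; exact (fh ub).2
      have hspan : b < a + ρ := by rw [← hub, ← hua]; exact hfh.2.2.2 ub ua
      have hab : a ≤ b := by rw [← hub]; exact hage ub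
      have hwinlen : (window s a b).length = b + 1 - a := by
        simp only [window, List.length_drop, List.length_take]
        omega
      have haklen : ∀ k, k < (window s a b).length → a + k < s.length := by
        intro k hk; rw [hwinlen] at hk; omega
      have hwinget : ∀ (k : ℕ) (hk : k < (window s a b).length),
          (window s a b).get ⟨k, hk⟩ = s.get ⟨a + k, haklen k hk⟩ := by
        intro k hk
        show ((s.take (b + 1)).drop a).get _ = _
        simp [window, List.getElem_drop, List.getElem_take]
      have hcovW : Covers (window s a b) ((icl s ρ (G.eraseNode v)).restrict U) := by
        have hlt' : ∀ (u : ℕ) (hu : u ∈ U),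
            (fh ⟨u, hU1 hu⟩ : ℕ) - a < (window s a b).length := by
          intro u hu
          rw [hwinlen]
          have h3 := hble ⟨u, hU1 hu⟩
          have h4 := hage ⟨u, hU1 hu⟩
          omega
        refine ⟨fun u => ⟨(fh ⟨u.1, hU1 u.2⟩ : ℕ) - a, hlt' u.1 u.2⟩, ?_, ?_, ?_⟩
        · intro x y hxy
          have h1 := congrArg Fin.val hxy
          simp only at h1
          have hax := hage ⟨x.1, hU1 x.2⟩
          have hay := hage ⟨y.1, hU1 y.2⟩
          have h5 : fh ⟨x.1, hU1 x.2⟩ = fh ⟨y.1, hU1 y.2⟩ := Fin.ext (by omega)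
          have h6 := congrArg Subtype.val (hfh.1 h5)
          simp only at h6
          exact Subtype.ext h6
        · intro u
          rw [hwinget _ (hlt' u.1 u.2)]
          have h7 : a + ((fh ⟨u.1, hU1 u.2⟩ : ℕ) - a) = (fh ⟨u.1, hU1 u.2⟩ : ℕ) := by
            have := hage ⟨u.1, hU1 u.2⟩; omega
          have h8 : (⟨a + ((fh ⟨u.1, hU1 u.2⟩ : ℕ) - a),
              haklen _ (hlt' u.1 u.2)⟩ : Fin s.length) = fh ⟨u.1, hU1 u.2⟩ := Fin.ext h7
          rw [h8]
          exact hfh.2.1 _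
        · rintro x y ⟨hxU, hyU, hxy⟩
          obtain ⟨hx', hy', hall⟩ := hxy
          have h9 : (fh ⟨x.1, hU1 x.2⟩ : ℕ) < (fh ⟨y.1, hU1 y.2⟩ : ℕ) := hall fh hfh
          have hax := hage ⟨x.1, hU1 x.2⟩
          simp only [Fin.mk_lt_mk]
          omega
      obtain ⟨hc, hcinj, hclab, hcedge⟩ := hU3 _ hcovW
      refine ⟨fun x => ⟨a + (hc x : ℕ), haklen _ (hc x).2⟩, ⟨?_, ?_, ?_, ?_⟩, ?_⟩
      · intro x y hxy
        have h1 := congrArg Fin.val hxy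
        simp only at h1
        exact hcinj (Fin.ext (by omega))
      · intro x
        rw [← hwinget _ (hc x).2]
        have h2 : (⟨(hc x : ℕ), (hc x).2⟩ : Fin (window s a b).length) = hc x := rfl
        rw [h2]
        exact hclab x
      · intro x y hxy
        have h3 := hcedge x y hxy
        simp only [Fin.mk_lt_mk]
        omega
      · intro x y
        have h1 := (hc x).2
        have h2 := (hc y).2
        show a + (hc x : ℕ) < a + (hc y : ℕ) + ρ
        omega
      · intro x
        obtain ⟨p, q, hp, hq⟩ := hbnd ua
        obtain ⟨p', q', hp', hq'⟩ := hbnd ub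
        refine ⟨p, q', ?_, ?_⟩
        · have h3 : (fh ua : ℕ) = a := hua
          show (f p : ℕ) ≤ a + (hc x : ℕ)
          omega
        · have h3 : (fh ub : ℕ) = b := hub
          have h4 := (hc x).2
          show a + (hc x : ℕ) ≤ (f q' : ℕ)
          omega
    have hvnotF : G.lab v ∉ newF s ρ G := fun h => newF_notlab s ρ h v hvmem rfl
    have hlabvin : G.lab v ∈ newF s ρ (G.eraseNode v) := by
      refine Finset.mem_filter.2 ⟨?_, ?_, ?_⟩
      · obtain ⟨g, hg, -⟩ := hW f₀ hf₀
        have h1 := hg.2.1 ⟨v, hvmem⟩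
        exact List.mem_toFinset.2 (h1 ▸ List.get_mem s _)
      · intro f hf
        obtain ⟨g, hg, hbd⟩ := hW f hf
        obtain ⟨u, u', hu, hu'⟩ := hbd ⟨v, hvmem⟩
        exact ⟨g ⟨v, hvmem⟩, hg.2.1 _, ⟨u, hu⟩, ⟨u', hu'⟩⟩
      · intro u hu heq
        exact hGne hu (hlabuniq u (hGmem hu) heq)
    have hNFsub1 : ∀ x ∈ newF s ρ G, x ∈ newF s ρ (G.eraseNode v) := by
      intro x hx
      obtain ⟨hxs, -, hxl⟩ := Finset.mem_filter.1 hx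
      refine Finset.mem_filter.2 ⟨hxs, ?_, ?_⟩
      · intro f hf
        obtain ⟨g, hg, hbd⟩ := hW f hf
        obtain ⟨i, hi, ⟨p, hp⟩, ⟨q, hq⟩⟩ := newF_win s ρ hx g hg
        obtain ⟨u, u'', hu, -⟩ := hbd p
        obtain ⟨u''', u', -, hu'⟩ := hbd q
        refine ⟨i, hi, ⟨u, ?_⟩, ⟨u', ?_⟩⟩
        · have hpi : (g p : ℕ) ≤ (i : ℕ) := hp
          show (f u : ℕ) ≤ (i : ℕ)
          omega
        · have hqi : (i : ℕ) ≤ (g q : ℕ) := hq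
          show (i : ℕ) ≤ (f u' : ℕ)
          omega
      · intro u hu
        exact hxl u (hGmem hu)
    have hNFsub2 : ∀ x ∈ newF s ρ (G.eraseNode v), x ≠ G.lab v → x ∈ newF s ρ G := by
      intro x hx hxv
      obtain ⟨hxs, hwin, hnl⟩ := Finset.mem_filter.1 hx
      refine Finset.mem_filter.2 ⟨hxs, ?_, ?_⟩
      · intro g hg
        obtain ⟨i, hi, ⟨p, hp⟩, ⟨q, hq⟩⟩ := hwin _ (hres hg)
        exact ⟨i, hi, ⟨⟨p.1, hGmem p.2⟩, hp⟩, ⟨⟨q.1, hGmem q.2⟩, hq⟩⟩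
      · intro u hu heq
        by_cases huv : u = v
        · rw [huv] at heq
          exact hxv heq.symm
        · exact hnl u (Finset.mem_erase.2 ⟨huv, hu⟩) heq
    have hnewlabG : ∀ (u : {x // x ∈ (clN s ρ G).nodes}), u.1 ∉ G.nodes →
        (clN s ρ G).lab u.1 ∈ newF s ρ G := by
      intro u hu
      rcases clN_node_cases s ρ u.2 with h | ⟨x, hx, hux, huxl⟩
      · exact absurd h hu
      · rw [huxl]; exact hx
    have hnewlabG2 : ∀ (u : {x // x ∈ (clN s ρ (G.eraseNode v)).nodes}),
        u.1 ∉ (G.eraseNode v).nodes →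
        (clN s ρ (G.eraseNode v)).lab u.1 ∈ newF s ρ (G.eraseNode v) := by
      intro u hu
      rcases clN_node_cases s ρ u.2 with h | ⟨x, hx, hux, huxl⟩
      · exact absurd h hu
      · rw [huxl]; exact hx
    set ψ : {x // x ∈ (clN s ρ G).nodes} → {y // y ∈ (clN s ρ (G.eraseNode v)).nodes} :=
      fun u => if hu : u.1 ∈ (G.eraseNode v).nodes then ⟨u.1, Finset.mem_union_left _ hu⟩
        else if hv2 : u.1 = v then
          ⟨newNode s ρ (G.eraseNode v) (G.lab v), newNode_mem s ρ hlabvin⟩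
        else ⟨newNode s ρ (G.eraseNode v) ((clN s ρ G).lab u.1),
          newNode_mem s ρ (hNFsub1 _ (hnewlabG u (fun hm =>
            hu (Finset.mem_erase.2 ⟨hv2, hm⟩))))⟩ with hψdef
    have hψval : ∀ u, (u.1 ∈ (G.eraseNode v).nodes → (ψ u).1 = u.1) ∧
        (u.1 ∉ (G.eraseNode v).nodes → u.1 = v →
          (ψ u).1 = newNode s ρ (G.eraseNode v) (G.lab v)) ∧
        (u.1 ∉ (G.eraseNode v).nodes → u.1 ≠ v →
          (ψ u).1 = newNode s ρ (G.eraseNode v) ((clN s ρ G).lab u.1)) := by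
      intro u
      refine ⟨fun hu => ?_, fun hu hv2 => ?_, fun hu hv2 => ?_⟩
      · rw [hψdef]; simp only [dif_pos hu]
      · rw [hψdef]; simp only [dif_neg hu, dif_pos hv2]
      · rw [hψdef]; simp only [dif_neg hu, dif_neg hv2]
    have hψlab : ∀ u, (clN s ρ (G.eraseNode v)).lab (ψ u).1 = (clN s ρ G).lab u.1 := by
      intro u
      by_cases hu : u.1 ∈ (G.eraseNode v).nodes
      · rw [(hψval u).1 hu, clN_lab_old s ρ hu, clN_lab_old s ρ (hGmem hu)]
        rfl
      · by_cases hv2 : u.1 = v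
        · rw [(hψval u).2.1 hu hv2, newNode_lab s ρ hlabvin, hv2, clN_lab_old s ρ hvmem]
        · rw [(hψval u).2.2 hu hv2, newNode_lab s ρ (hNFsub1 _ (hnewlabG u (fun hm =>
            hu (Finset.mem_erase.2 ⟨hv2, hm⟩))))]
    have hψinj : Function.Injective ψ := by
      intro p q hpq
      have hval := congrArg Subtype.val hpq
      by_cases hp : p.1 ∈ (G.eraseNode v).nodes <;> by_cases hq : q.1 ∈ (G.eraseNode v).nodes
      · rw [(hψval p).1 hp, (hψval q).1 hq] at hval
        exact Subtype.ext hval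
      · exfalso
        by_cases hv2 : q.1 = v
        · rw [(hψval p).1 hp, (hψval q).2.1 hq hv2] at hval
          rw [hval] at hp
          exact newNode_not_old s ρ _ hp
        · rw [(hψval p).1 hp, (hψval q).2.2 hq hv2] at hval
          rw [hval] at hp
          exact newNode_not_old s ρ _ hp
      · exfalso
        by_cases hv2 : p.1 = v
        · rw [(hψval q).1 hq, (hψval p).2.1 hp hv2] at hval
          rw [← hval] at hq
          exact newNode_not_old s ρ _ hq
        · rw [(hψval q).1 hq, (hψval p).2.2 hp hv2] at hval
          rw [← hval] at hq
          exact newNode_not_old s ρ _ hq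
      · by_cases hv2 : p.1 = v <;> by_cases hv3 : q.1 = v
        · exact Subtype.ext (by rw [hv2, hv3])
        · exfalso
          have hqm := hNFsub1 _ (hnewlabG q (fun hm => hq (Finset.mem_erase.2 ⟨hv3, hm⟩)))
          rw [(hψval p).2.1 hp hv2, (hψval q).2.2 hq hv3] at hval
          have h10 := newNode_inj s ρ hlabvin hqm hval
          apply hvnotF
          rw [h10]
          exact hnewlabG q (fun hm => hq (Finset.mem_erase.2 ⟨hv3, hm⟩))
        · exfalso
          have hpm := hNFsub1 _ (hnewlabG p (fun hm => hp (Finset.mem_erase.2 ⟨hv2, hm⟩)))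
          rw [(hψval q).2.1 hq hv3, (hψval p).2.2 hp hv2] at hval
          have h10 := newNode_inj s ρ hpm hlabvin hval
          apply hvnotF
          rw [← h10]
          exact hnewlabG p (fun hm => hp (Finset.mem_erase.2 ⟨hv2, hm⟩))
        · have hpm := hnewlabG p (fun hm => hp (Finset.mem_erase.2 ⟨hv2, hm⟩))
          have hqm := hnewlabG q (fun hm => hq (Finset.mem_erase.2 ⟨hv3, hm⟩))
          rw [(hψval p).2.2 hp hv2, (hψval q).2.2 hq hv3] at hval
          have hleq := newNode_inj s ρ (hNFsub1 _ hpm) (hNFsub1 _ hqm) hval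
          have hp' : p.1 ∉ G.nodes := fun hm => hp (Finset.mem_erase.2 ⟨hv2, hm⟩)
          have hq' : q.1 ∉ G.nodes := fun hm => hq (Finset.mem_erase.2 ⟨hv3, hm⟩)
          exact Subtype.ext (clN_new_lab_inj s ρ p.2 hp' q.2 hq' hleq)
    have hψedge : ∀ x y, (clN s ρ G).edge x.1 y.1 →
        (clN s ρ (G.eraseNode v)).edge (ψ x).1 (ψ y).1 := by
      intro x y hxy
      have hxy' : G.edge x.1 y.1 := hxy
      have hxv : x.1 ≠ v := fun hm => (hsol y.1).2 (hm ▸ hxy')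
      have hyv : y.1 ≠ v := fun hm => (hsol x.1).1 (hm ▸ hxy')
      have hxm : x.1 ∈ (G.eraseNode v).nodes :=
        Finset.mem_erase.2 ⟨hxv, (G.edge_mem hxy').1⟩
      have hym : y.1 ∈ (G.eraseNode v).nodes :=
        Finset.mem_erase.2 ⟨hyv, (G.edge_mem hxy').2⟩
      rw [(hψval x).1 hxm, (hψval y).1 hym]
      exact ⟨hxy', hxv, hyv⟩
    set φ : {x // x ∈ (clN s ρ (G.eraseNode v)).nodes} → {y // y ∈ (clN s ρ G).nodes} :=
      fun u => if hu : u.1 ∈ (G.eraseNode v).nodes then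
          ⟨u.1, Finset.mem_union_left _ (hGmem hu)⟩
        else if hl : (clN s ρ (G.eraseNode v)).lab u.1 = G.lab v then
          ⟨v, Finset.mem_union_left _ hvmem⟩
        else ⟨newNode s ρ G ((clN s ρ (G.eraseNode v)).lab u.1),
          newNode_mem s ρ (hNFsub2 _ (hnewlabG2 u hu) hl)⟩ with hφdef
    have hφval : ∀ u, (u.1 ∈ (G.eraseNode v).nodes → (φ u).1 = u.1) ∧
        (u.1 ∉ (G.eraseNode v).nodes → (clN s ρ (G.eraseNode v)).lab u.1 = G.lab v →
          (φ u).1 = v) ∧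
        (u.1 ∉ (G.eraseNode v).nodes → (clN s ρ (G.eraseNode v)).lab u.1 ≠ G.lab v →
          (φ u).1 = newNode s ρ G ((clN s ρ (G.eraseNode v)).lab u.1)) := by
      intro u
      refine ⟨fun hu => ?_, fun hu hl => ?_, fun hu hl => ?_⟩
      · rw [hφdef]; simp only [dif_pos hu]
      · rw [hφdef]; simp only [dif_neg hu, dif_pos hl]
      · rw [hφdef]; simp only [dif_neg hu, dif_neg hl]
    have hφlab : ∀ u, (clN s ρ G).lab (φ u).1 = (clN s ρ (G.eraseNode v)).lab u.1 := by
      intro u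
      by_cases hu : u.1 ∈ (G.eraseNode v).nodes
      · rw [(hφval u).1 hu, clN_lab_old s ρ (hGmem hu), clN_lab_old s ρ hu]
        rfl
      · by_cases hl : (clN s ρ (G.eraseNode v)).lab u.1 = G.lab v
        · rw [(hφval u).2.1 hu hl, clN_lab_old s ρ hvmem, hl]
        · rw [(hφval u).2.2 hu hl, newNode_lab s ρ (hNFsub2 _ (hnewlabG2 u hu) hl)]
    have hφinj : Function.Injective φ := by
      intro p q hpq
      have hval := congrArg Subtype.val hpq
      by_cases hp : p.1 ∈ (G.eraseNode v).nodes <;> by_cases hq : q.1 ∈ (G.eraseNode v).nodes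
      · rw [(hφval p).1 hp, (hφval q).1 hq] at hval
        exact Subtype.ext hval
      · exfalso
        by_cases hl : (clN s ρ (G.eraseNode v)).lab q.1 = G.lab v
        · rw [(hφval p).1 hp, (hφval q).2.1 hq hl] at hval
          exact hGne hp hval
        · rw [(hφval p).1 hp, (hφval q).2.2 hq hl] at hval
          rw [hval] at hp
          exact newNode_not_old s ρ _ (hGmem hp)
      · exfalso
        by_cases hl : (clN s ρ (G.eraseNode v)).lab p.1 = G.lab v
        · rw [(hφval q).1 hq, (hφval p).2.1 hp hl] at hval
          exact hGne hq hval.symm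
        · rw [(hφval q).1 hq, (hφval p).2.2 hp hl] at hval
          rw [← hval] at hq
          exact newNode_not_old s ρ _ (hGmem hq)
      · by_cases hl : (clN s ρ (G.eraseNode v)).lab p.1 = G.lab v <;>
          by_cases hl2 : (clN s ρ (G.eraseNode v)).lab q.1 = G.lab v
        · exact Subtype.ext (clN_new_lab_inj s ρ p.2 hp q.2 hq (hl.trans hl2.symm))
        · exfalso
          rw [(hφval p).2.1 hp hl, (hφval q).2.2 hq hl2] at hval
          exact newNode_not_old s ρ ((clN s ρ (G.eraseNode v)).lab q.1) (hval ▸ hvmem)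
        · exfalso
          rw [(hφval q).2.1 hq hl2, (hφval p).2.2 hp hl] at hval
          exact newNode_not_old s ρ ((clN s ρ (G.eraseNode v)).lab p.1) (hval.symm ▸ hvmem)
        · rw [(hφval p).2.2 hp hl, (hφval q).2.2 hq hl2] at hval
          have hleq := newNode_inj s ρ (hNFsub2 _ (hnewlabG2 p hp) hl)
            (hNFsub2 _ (hnewlabG2 q hq) hl2) hval
          exact Subtype.ext (clN_new_lab_inj s ρ p.2 hp q.2 hq hleq)
    have hφedge : ∀ x y, (clN s ρ (G.eraseNode v)).edge x.1 y.1 →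
        (clN s ρ G).edge (φ x).1 (φ y).1 := by
      intro x y hxy
      have hxy' : (G.eraseNode v).edge x.1 y.1 := hxy
      have hxm : x.1 ∈ (G.eraseNode v).nodes := ((G.eraseNode v).edge_mem hxy').1
      have hym : y.1 ∈ (G.eraseNode v).nodes := ((G.eraseNode v).edge_mem hxy').2
      rw [(hφval x).1 hxm, (hφval y).1 hym]
      exact hxy'.1
    intro t
    constructor
    · intro h
      exact covers_icl_mono s ρ φ hφinj hφlab hφedge h
    · intro h
      exact covers_icl_mono s ρ ψ hψinj hψlab hψedge h
  · -- no occurrences: both closures are uncoverable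
    have hnoG : ¬ ∃ f, IsOcc s ρ G f := fun ⟨f, hf⟩ => hocc ⟨_, hres hf⟩
    have hnoc1 : ¬ ∃ f, IsOcc s ρ (clN s ρ G) f := by
      rintro ⟨f, hf⟩
      exact hnoG ⟨_, occ_restrict s ρ hf⟩
    have hnoc2 : ¬ ∃ f, IsOcc s ρ (clN s ρ (G.eraseNode v)) f := by
      rintro ⟨f, hf⟩
      exact hocc ⟨_, occ_restrict s ρ hf⟩
    intro t
    constructor
    · rintro ⟨F, -, -, hFedge⟩
      exfalso
      have hvN : v ∈ (clN s ρ G).nodes := Finset.mem_union_left _ hvmem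
      have hloop : (icl s ρ G).edge v v :=
        ⟨hvN, hvN, fun f hf => absurd ⟨f, hf⟩ hnoc1⟩
      exact lt_irrefl _ (hFedge ⟨v, hvN⟩ ⟨v, hvN⟩ hloop)
    · rintro ⟨F, -, -, hFedge⟩
      exfalso
      obtain ⟨x₀, hx₀U⟩ : U.Nonempty :=
        Finset.card_pos.1 (by rw [hU2]; exact Finset.card_pos.2 ⟨v, hvmem⟩)
      have hx₀ : x₀ ∈ (clN s ρ (G.eraseNode v)).nodes := hU1 hx₀U
      have hloop : (icl s ρ (G.eraseNode v)).edge x₀ x₀ :=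
        ⟨hx₀, hx₀, fun f hf => absurd ⟨f, hf⟩ hnoc2⟩
      exact lt_irrefl _ (hFedge ⟨x₀, hx₀⟩ ⟨x₀, hx₀⟩ hloop)

end Aux

open Episode in
/-- Removing a derivable proper skeleton edge or a derivable solitary node
does not change the i-closure: if `e` is a derivable proper skeleton edge of
`G ∈ 𝒮`, then `icl(G) = icl(G − e)`, and if `v` is a derivable solitary node,
then `icl(G) = icl(G − v)` (the i-closures being the same episode, i.e.
covered by exactly the same sequences). -/
theorem stmt18 {α : Type*} [LinearOrder α] (s : List α) (ρ : ℕ)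
    (G : Episode α) (hG : inS G) :
    (∀ e, DerivableEdge s ρ G e → icl s ρ G = icl s ρ (G.eraseEdge e)) ∧
    ∀ v, DerivableNode s ρ G v →
      ∀ t : List α, Covers t (icl s ρ G) ↔ Covers t (icl s ρ (G.eraseNode v)) := by
  constructor
  · intro e hD
    exact part1 s ρ hG hD
  · intro v hD
    exact part2 s ρ hG hD
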